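/- Let m be a non-negative integer and let τ, z₁, z₂, t ∈ ℂ with Im τ > 0, z₁ ∉ ℤ + ℤτ and z₂ ∉ ℤ + ℤτ, and set q = e^{2πiτ}. Then: (a) Φ^{[m]}(τ, z₁+a, z₂+b, t) = Φ^{[m]}(τ, z₁, z₂, t) for all integers a, b; (b) Φ^{[m]}(τ, −z₁, −z₂, t) = −Φ^{[m]}(τ, z₁, z₂, t); (c) Φ^{[m]}(τ, z₂, z₁, t) = Φ^{[m]}(τ, z₁, z₂, t); (d) Φ^{[m]}(τ, z₁+τ, z₂+τ, t) = q^{−(m+1)} e^{−2πi(m+1)(z₁+z₂)} Φ^{[m]}(τ, z₁, z₂, t). -/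

import Mathlib

open Complex

namespace KW

local notation "π" => (Real.pi : ℂ)

/-- The lattice `ℤ + ℤτ`. -/
def InLattice (τ z : ℂ) : Prop := ∃ a b : ℤ, z = (a : ℂ) + (b : ℂ) * τ

/-- The mock theta function `Φ^[m]` of Kac–Wakimoto. -/
noncomputable def Phi (m : ℕ) (τ z₁ z₂ t : ℂ) : ℂ :=
  exp (2 * π * I * ((m : ℂ) + 1) * t) *
    ∑' j : ℤ,
      (exp (2 * π * I * (j : ℂ) * ((m : ℂ) + 1) * (z₁ + z₂)) *
            exp (2 * π * I * τ * (((m : ℂ) + 1) * (j : ℂ) ^ 2)) /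
          (1 - exp (2 * π * I * z₁) * exp (2 * π * I * τ * (j : ℂ))) -
        exp (-(2 * π * I * (j : ℂ) * ((m : ℂ) + 1) * (z₁ + z₂))) *
            exp (2 * π * I * τ * (((m : ℂ) + 1) * (j : ℂ) ^ 2)) /
          (1 - exp (-(2 * π * I * z₂)) * exp (2 * π * I * τ * (j : ℂ))))

/-- Numerator. -/
noncomputable def N (m : ℕ) (τ w : ℂ) (j : ℤ) : ℂ :=
  exp (2 * π * I * (j : ℂ) * ((m : ℂ) + 1) * w) *
    exp (2 * π * I * τ * (((m : ℂ) + 1) * (j : ℂ) ^ 2))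

/-- Denominator. -/
noncomputable def D (τ z : ℂ) (j : ℤ) : ℂ :=
  1 - exp (2 * π * I * z) * exp (2 * π * I * τ * (j : ℂ))

noncomputable def A (m : ℕ) (τ z₁ z₂ : ℂ) (j : ℤ) : ℂ :=
  N m τ (z₁ + z₂) j / D τ z₁ j

lemma Phi_eq (m : ℕ) (τ z₁ z₂ t : ℂ) :
    Phi m τ z₁ z₂ t = exp (2 * π * I * ((m : ℂ) + 1) * t) *
      ∑' j : ℤ, (A m τ z₁ z₂ j - A m τ (-z₂) (-z₁) j) := by
  unfold Phi A N D
  congr 1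
  refine tsum_congr fun j => ?_
  rw [show -(2 * π * I * (j : ℂ) * ((m : ℂ) + 1) * (z₁ + z₂))
        = 2 * π * I * (j : ℂ) * ((m : ℂ) + 1) * (-z₂ + -z₁) by ring,
      show -(2 * π * I * z₂) = 2 * π * I * (-z₂) by ring]

lemma InLattice.neg {τ z : ℂ} (h : InLattice τ z) : InLattice τ (-z) := by
  obtain ⟨a, b, rfl⟩ := h
  exact ⟨-a, -b, by push_cast; ring⟩

lemma not_inLattice_neg {τ z : ℂ} (h : ¬ InLattice τ z) : ¬ InLattice τ (-z) := by
  intro hh; exact h (by simpa using hh.neg)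

lemma D_ne {τ z : ℂ} (h : ¬ InLattice τ z) (j : ℤ) : D τ z j ≠ 0 := by
  intro h0
  apply h
  rw [D, sub_eq_zero] at h0
  rw [← Complex.exp_add] at h0
  obtain ⟨n, hn⟩ := Complex.exp_eq_one_iff.mp h0.symm
  refine ⟨n, -j, ?_⟩
  have h2 : (2 * π * I) ≠ 0 := by
    simp [Real.pi_ne_zero, I_ne_zero, Complex.ofReal_ne_zero]
  have h3 : (2 * π * I) * (z - ((n : ℂ) + ((-j : ℤ) : ℂ) * τ)) = (2 * π * I) * 0 := by
    rw [mul_zero]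
    push_cast
    push_cast at hn
    linear_combination hn
  exact sub_eq_zero.mp (mul_left_cancel₀ h2 h3)


open Filter in
lemma summable_N (m : ℕ) {τ : ℂ} (hτ : 0 < τ.im) (w : ℂ) : Summable (N m τ w) := by
  have key : N m τ w = fun j : ℤ => jacobiTheta₂_term j (((m : ℂ) + 1) * w) (2 * ((m : ℂ) + 1) * τ) := by
    funext j
    unfold N jacobiTheta₂_term
    rw [← Complex.exp_add]
    exact congrArg Complex.exp (by push_cast; ring)
  rw [key, summable_jacobiTheta₂_term_iff]
  have him : (2 * ((m : ℂ) + 1) * τ).im = (2 * ((m : ℝ) + 1)) * τ.im := by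
    have h1 : 2 * ((m : ℂ) + 1) * τ = ((2 * ((m : ℝ) + 1) : ℝ) : ℂ) * τ := by push_cast; ring
    rw [h1, Complex.im_ofReal_mul]
  rw [him]
  have : (0:ℝ) < 2 * ((m : ℝ) + 1) := by positivity
  exact mul_pos this hτ

open Filter in
lemma D_bound {τ : ℂ} (hτ : 0 < τ.im) (z : ℂ) :
    ∀ᶠ j in Filter.cofinite, (1/2 : ℝ) ≤ ‖D τ z j‖ := by
  set c₀ := (2 * π * I * z).re with hc₀
  set c₁ := (2 * π * I * τ).re with hc₁def
  have hnorm : ∀ j : ℤ, ‖exp (2 * π * I * z) * exp (2 * π * I * τ * (j : ℂ))‖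
      = Real.exp (c₀ + c₁ * (j : ℝ)) := by
    intro j
    rw [norm_mul, Complex.norm_exp, Complex.norm_exp,
      ← Real.exp_add]
    congr 1
    have h1 : 2 * π * I * τ * (j : ℂ) = (((j : ℝ)) : ℂ) * (2 * π * I * τ) := by push_cast; ring
    rw [h1, Complex.re_ofReal_mul]
    ring
  have hc₁ : c₁ = -(2 * Real.pi * τ.im) := by
    simp [hc₁def, Complex.mul_re, Complex.mul_im]
  have hc₁neg : c₁ < 0 := by
    rw [hc₁]
    have := Real.pi_pos
    nlinarith
  have hlin_top : Tendsto (fun j : ℤ => c₀ + c₁ * (j : ℝ)) atTop atBot :=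
    tendsto_atBot_add_const_left _ c₀ (tendsto_intCast_atTop_atTop.const_mul_atTop_of_neg hc₁neg)
  have hlin_bot : Tendsto (fun j : ℤ => c₀ + c₁ * (j : ℝ)) atBot atTop :=
    tendsto_atTop_add_const_left _ c₀
      ((tendsto_intCast_atBot_iff.2 tendsto_id).const_mul_atBot_of_neg hc₁neg)
  rw [Int.cofinite_eq, eventually_sup]
  constructor
  · -- atBot : norm of product large
    have : ∀ᶠ j : ℤ in atBot, (3/2 : ℝ) ≤ Real.exp (c₀ + c₁ * (j : ℝ)) :=
      (Real.tendsto_exp_atTop.comp hlin_bot).eventually_ge_atTop (3/2)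
    filter_upwards [this] with j hj
    have h2 := norm_sub_norm_le (exp (2 * π * I * z) * exp (2 * π * I * τ * (j : ℂ))) 1
    rw [hnorm j] at h2
    rw [D, norm_sub_rev]
    simp only [norm_one] at h2
    linarith
  · -- atTop : norm of product small
    have : ∀ᶠ j : ℤ in atTop, Real.exp (c₀ + c₁ * (j : ℝ)) < 1/2 :=
      (Real.tendsto_exp_atBot.comp hlin_top).eventually_lt_const (by norm_num)
    filter_upwards [this] with j hj
    have h2 := norm_sub_norm_le (1 : ℂ) (exp (2 * π * I * z) * exp (2 * π * I * τ * (j : ℂ)))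
    rw [hnorm j] at h2
    rw [D]
    simp only [norm_one] at h2
    linarith

lemma summable_A (m : ℕ) {τ z₁ : ℂ} (hτ : 0 < τ.im) (h₁ : ¬ InLattice τ z₁) (z₂ : ℂ) :
    Summable (A m τ z₁ z₂) := by
  refine Summable.of_norm_bounded_eventually (g := fun j => 2 * ‖N m τ (z₁ + z₂) j‖)
    ((summable_norm_iff.mpr (summable_N m hτ _)).mul_left 2) ?_
  filter_upwards [D_bound hτ z₁] with j hj
  rw [A, norm_div]
  have h0 : 0 < ‖D τ z₁ j‖ := lt_of_lt_of_le (by norm_num) hj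
  rw [div_le_iff₀ h0]
  nlinarith [norm_nonneg (N m τ (z₁ + z₂) j)]


lemma N_neg (m : ℕ) (τ w : ℂ) (j : ℤ) : N m τ w (-j) = N m τ (-w) j := by
  unfold N
  congr 1 <;> exact congrArg Complex.exp (by push_cast; ring)

lemma tsum_N_neg (m : ℕ) (τ w : ℂ) : ∑' j : ℤ, N m τ (-w) j = ∑' j : ℤ, N m τ w j := by
  rw [← (Equiv.neg ℤ).tsum_eq (N m τ w)]
  exact tsum_congr fun j => (N_neg m τ w j).symm

lemma A_int (m : ℕ) (τ u v : ℂ) (a b j : ℤ) :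
    A m τ (u + (a : ℂ)) (v + (b : ℂ)) j = A m τ u v j := by
  unfold A N D
  have h1 : exp (2 * π * I * (j : ℂ) * ((m : ℂ) + 1) * ((u + (a : ℂ)) + (v + (b : ℂ))))
      = exp (2 * π * I * (j : ℂ) * ((m : ℂ) + 1) * (u + v)) := by
    rw [show 2 * π * I * (j : ℂ) * ((m : ℂ) + 1) * ((u + (a : ℂ)) + (v + (b : ℂ)))
          = 2 * π * I * (j : ℂ) * ((m : ℂ) + 1) * (u + v)
            + ((j * ((m : ℤ) + 1) * (a + b) : ℤ) : ℂ) * (2 * π * I) by push_cast; ring,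
      Complex.exp_add, Complex.exp_int_mul_two_pi_mul_I, mul_one]
  have h2 : exp (2 * π * I * (u + (a : ℂ))) = exp (2 * π * I * u) := by
    rw [show 2 * π * I * (u + (a : ℂ)) = 2 * π * I * u + (a : ℂ) * (2 * π * I) by ring,
      Complex.exp_add, Complex.exp_int_mul_two_pi_mul_I, mul_one]
  rw [h1, h2]

lemma frac_aux {n x y : ℂ} (hx : x ≠ 0) (hy : y ≠ 0) (h1 : 1 - x * y⁻¹ ≠ 0)
    (h2 : 1 - x⁻¹ * y ≠ 0) :
    n / (1 - x * y⁻¹) = n - n / (1 - x⁻¹ * y) := by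
  have hyx : y - x ≠ 0 := by
    intro h
    apply h1
    rw [sub_eq_zero] at h
    rw [← h, mul_inv_cancel₀ hy, sub_self]
  have hxy : x - y ≠ 0 := by
    intro h
    apply hyx
    rw [sub_eq_zero] at h ⊢
    exact h.symm
  field_simp
  ring

lemma A_neg_index (m : ℕ) {τ u : ℂ} (hu : ¬ InLattice τ u) (v : ℂ) (j : ℤ) :
    A m τ u v (-j) = N m τ (-(u + v)) j - A m τ (-u) (-v) j := by
  have hD1 : D τ u (-j) ≠ 0 := D_ne hu (-j)
  have hD2 : D τ (-u) j ≠ 0 := D_ne (not_inLattice_neg hu) j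
  have hN : N m τ (u + v) (-j) = N m τ (-(u + v)) j := by
    unfold N; congr 1 <;> exact congrArg Complex.exp (by push_cast; ring)
  have harg : -u + -v = -(u + v) := by ring
  unfold A
  rw [hN, harg]
  have e1 : exp (2 * π * I * τ * ((-j : ℤ) : ℂ)) = (exp (2 * π * I * τ * (j : ℂ)))⁻¹ := by
    rw [← Complex.exp_neg]; exact congrArg Complex.exp (by push_cast; ring)
  have e2 : exp (2 * π * I * (-u)) = (exp (2 * π * I * u))⁻¹ := by
    rw [← Complex.exp_neg]; exact congrArg Complex.exp (by ring)
  unfold D at hD1 hD2 ⊢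
  rw [e1] at hD1 ⊢
  rw [e2] at hD2 ⊢
  exact frac_aux (Complex.exp_ne_zero _) (Complex.exp_ne_zero _) hD1 hD2

lemma A_shift_up (m : ℕ) (τ u v : ℂ) (j : ℤ) :
    A m τ (u + τ) (v + τ) j =
      exp (2 * π * I * τ * (-((m : ℂ) + 1))) * exp (-(2 * π * I * ((m : ℂ) + 1) * (u + v)))
        * A m τ u v (j + 1) := by
  unfold A N D
  rw [← mul_div_assoc]
  simp only [← Complex.exp_add]
  congr 1
  · exact congrArg Complex.exp (by push_cast; ring)
  · congr 1
    exact congrArg Complex.exp (by push_cast; ring)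

lemma A_shift_down (m : ℕ) (τ u v : ℂ) (j : ℤ) :
    A m τ (u - τ) (v - τ) j =
      exp (2 * π * I * τ * (-((m : ℂ) + 1))) * exp (2 * π * I * ((m : ℂ) + 1) * (u + v))
        * A m τ u v (j - 1) := by
  unfold A N D
  rw [← mul_div_assoc]
  simp only [← Complex.exp_add]
  congr 1
  · exact congrArg Complex.exp (by push_cast; ring)
  · congr 1
    exact congrArg Complex.exp (by push_cast; ring)


/-- Lemma 5.1(a)–(d) of Kac–Wakimoto: elementary transformation properties of `Φ^[m]`. -/
theorem statement0 (m : ℕ) (τ z₁ z₂ t : ℂ) (hτ : 0 < τ.im)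
    (h₁ : ¬ InLattice τ z₁) (h₂ : ¬ InLattice τ z₂) :
    (∀ a b : ℤ, Phi m τ (z₁ + (a : ℂ)) (z₂ + (b : ℂ)) t = Phi m τ z₁ z₂ t) ∧
    (Phi m τ (-z₁) (-z₂) t = -Phi m τ z₁ z₂ t) ∧
    (Phi m τ z₂ z₁ t = Phi m τ z₁ z₂ t) ∧
    (Phi m τ (z₁ + τ) (z₂ + τ) t =
      exp (2 * π * I * τ * (-((m : ℂ) + 1))) *
        exp (-(2 * π * I * ((m : ℂ) + 1) * (z₁ + z₂))) * Phi m τ z₁ z₂ t) := by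
  have h₁' := not_inLattice_neg h₁
  have h₂' := not_inLattice_neg h₂
  have SA12 : Summable (A m τ z₁ z₂) := summable_A m hτ h₁ z₂
  have SA21 : Summable (A m τ z₂ z₁) := summable_A m hτ h₂ z₁
  have SB12 : Summable (A m τ (-z₂) (-z₁)) := summable_A m hτ h₂' (-z₁)
  have SB21 : Summable (A m τ (-z₁) (-z₂)) := summable_A m hτ h₁' (-z₂)
  have SN : ∀ w : ℂ, Summable (N m τ w) := fun w => summable_N m hτ w
  have hc : Phi m τ z₂ z₁ t = Phi m τ z₁ z₂ t := by
    rw [Phi_eq m τ z₂ z₁ t, Phi_eq m τ z₁ z₂ t]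
    congr 1
    have e1 : ∑' j : ℤ, (A m τ z₁ z₂ j - A m τ (-z₂) (-z₁) j)
        = ∑' j : ℤ, ((A m τ z₂ z₁ j - A m τ (-z₁) (-z₂) j)
            + (N m τ (-(z₁ + z₂)) j - N m τ (z₁ + z₂) j)) := by
      refine Eq.trans
        ((Equiv.neg ℤ).tsum_eq (fun j => A m τ z₁ z₂ j - A m τ (-z₂) (-z₁) j)).symm
        (tsum_congr fun j => ?_)
      show A m τ z₁ z₂ (-j) - A m τ (-z₂) (-z₁) (-j) = _
      rw [A_neg_index m h₁ z₂ j, A_neg_index m h₂' (-z₁) j]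
      rw [show -(-z₂ + -z₁) = z₁ + z₂ by ring]
      simp only [neg_neg]
      ring
    rw [e1, Summable.tsum_add (SA21.sub SB21) ((SN _).sub (SN _)),
      Summable.tsum_sub (SN (-(z₁ + z₂))) (SN (z₁ + z₂)), tsum_N_neg m τ (z₁ + z₂), sub_self, add_zero]
  refine ⟨?_, ?_, hc, ?_⟩
  · intro a b
    rw [Phi_eq m τ (z₁ + (a : ℂ)) (z₂ + (b : ℂ)) t, Phi_eq m τ z₁ z₂ t]
    congr 1
    refine tsum_congr fun j => ?_
    rw [A_int m τ z₁ z₂ a b j,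
      show -(z₂ + (b : ℂ)) = -z₂ + ((-b : ℤ) : ℂ) by push_cast; ring,
      show -(z₁ + (a : ℂ)) = -z₁ + ((-a : ℤ) : ℂ) by push_cast; ring,
      A_int m τ (-z₂) (-z₁) (-b) (-a) j]
  · rw [Phi_eq m τ (-z₁) (-z₂) t, ← hc, Phi_eq m τ z₂ z₁ t]
    simp only [neg_neg]
    rw [← mul_neg]
    congr 1
    rw [← tsum_neg]
    exact tsum_congr fun j => by ring
  · rw [Phi_eq m τ (z₁ + τ) (z₂ + τ) t, Phi_eq m τ z₁ z₂ t]
    set K1 := exp (2 * π * I * τ * (-((m : ℂ) + 1))) with hK1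
    set K2 := exp (-(2 * π * I * ((m : ℂ) + 1) * (z₁ + z₂))) with hK2
    have e1 : ∀ j : ℤ, A m τ (z₁ + τ) (z₂ + τ) j - A m τ (-(z₂ + τ)) (-(z₁ + τ)) j
        = K1 * K2 * (A m τ z₁ z₂ (j + 1) - A m τ (-z₂) (-z₁) (j - 1)) := by
      intro j
      rw [A_shift_up m τ z₁ z₂ j,
        show -(z₂ + τ) = -z₂ - τ by ring, show -(z₁ + τ) = -z₁ - τ by ring,
        A_shift_down m τ (-z₂) (-z₁) j,
        show 2 * π * I * ((m : ℂ) + 1) * (-z₂ + -z₁)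
          = -(2 * π * I * ((m : ℂ) + 1) * (z₁ + z₂)) by ring]
      rw [← hK1, ← hK2]
      ring
    have SAs : Summable (fun j : ℤ => A m τ z₁ z₂ (j + 1)) := by
      have h := (Equiv.addRight (1 : ℤ)).summable_iff.mpr SA12
      simpa [Function.comp_def] using h
    have SBs : Summable (fun j : ℤ => A m τ (-z₂) (-z₁) (j - 1)) := by
      have h := (Equiv.subRight (1 : ℤ)).summable_iff.mpr SB12
      simpa [Function.comp_def] using h
    have e2 : ∑' j : ℤ, (A m τ z₁ z₂ (j + 1) - A m τ (-z₂) (-z₁) (j - 1))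
        = ∑' j : ℤ, (A m τ z₁ z₂ j - A m τ (-z₂) (-z₁) j) := by
      rw [Summable.tsum_sub SAs SBs, Summable.tsum_sub SA12 SB12]
      congr 1
      · simpa using (Equiv.addRight (1 : ℤ)).tsum_eq (A m τ z₁ z₂)
      · simpa using (Equiv.subRight (1 : ℤ)).tsum_eq (A m τ (-z₂) (-z₁))
    have e0 : ∑' j : ℤ, (A m τ (z₁ + τ) (z₂ + τ) j - A m τ (-(z₂ + τ)) (-(z₁ + τ)) j)
        = K1 * K2 * ∑' j : ℤ, (A m τ z₁ z₂ j - A m τ (-z₂) (-z₁) j) := by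
      rw [← e2, ← tsum_mul_left]
      exact tsum_congr e1
    rw [e0]
    ring

end KW
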